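/- Let σ : M → ℤ be an additive group homomorphism with σ(λ) ≥ 0 for every λ ∈ S and σ(μ) ≥ 0. Then the K-linear span I of {f_λ | λ ∈ S, σ(λ) > 0} is an ideal of K[S], and ∂(I) ⊆ I. (This is the stability, under the standard locally nilpotent derivation ∂_μ, of the ideal of the orbit closure corresponding to a ray of the weight cone, used in the proof of Proposition 6.6 of the paper.) -/

import Mathlib

open AddMonoidAlgebra

/-- If `σ : M →+ ℤ` is nonnegative on `S` and on `μ`, then the `K`-linear span `I` of
`{f_λ ∣ λ ∈ S, σ(λ) > 0}` is an ideal of `K[S]` stable under the standard locally nilpotent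
derivation `∂` attached to the Demazure root `μ`. -/
theorem stmt11 {K M : Type*} [Field K] [CharZero K] [AddCommGroup M]
    [Module.Free ℤ M] [Module.Finite ℤ M]
    (S : AddSubmonoid M) (ρ : M →+ ℤ) (μ : M)
    (h1 : ∀ l ∈ S, 0 ≤ ρ l) (h2 : ρ μ = -1)
    (h3 : ∀ l ∈ S, 0 < ρ l → l + μ ∈ S)
    (D : Derivation K (AddMonoidAlgebra K S) (AddMonoidAlgebra K S))
    (hD : ∀ l : S,
      (∀ h : 0 < ρ (l : M),
        D (of' K S l) = ((ρ (l : M) : K)) • of' K S (⟨(l : M) + μ, h3 l l.2 h⟩ : S))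
      ∧ (ρ (l : M) = 0 → D (of' K S l) = 0))
    (σ : M →+ ℤ) (hσS : ∀ l ∈ S, 0 ≤ σ l) (hσμ : 0 ≤ σ μ) :
    (∀ a : AddMonoidAlgebra K S,
      ∀ x ∈ Submodule.span K {x : AddMonoidAlgebra K S | ∃ l : S, 0 < σ (l : M) ∧ x = of' K S l},
        a * x ∈ Submodule.span K
          {x : AddMonoidAlgebra K S | ∃ l : S, 0 < σ (l : M) ∧ x = of' K S l})
    ∧ (∀ x ∈ Submodule.span K
          {x : AddMonoidAlgebra K S | ∃ l : S, 0 < σ (l : M) ∧ x = of' K S l},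
        D x ∈ Submodule.span K
          {x : AddMonoidAlgebra K S | ∃ l : S, 0 < σ (l : M) ∧ x = of' K S l}) := by
  set s : Set (AddMonoidAlgebra K S) :=
    {x : AddMonoidAlgebra K S | ∃ l : S, 0 < σ (l : M) ∧ x = of' K S l} with hs
  constructor
  · intro a x hx
    induction hx using Submodule.span_induction with
    | mem x hx =>
      obtain ⟨l, hl, rfl⟩ := hx
      induction a using AddMonoidAlgebra.induction_linear with
      | zero => simpa using (Submodule.span K s).zero_mem
      | add p q hp hq =>
        rw [add_mul]; exact (Submodule.span K s).add_mem hp hq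
      | single m c =>
        have : (single m c : AddMonoidAlgebra K S) * of' K S l
            = c • of' K S (m + l) := by
          rw [of'_apply, of'_apply, AddMonoidAlgebra.single_mul_single, mul_one,
            AddMonoidAlgebra.smul_single', mul_one]
        rw [this]
        refine (Submodule.span K s).smul_mem _ (Submodule.subset_span ?_)
        refine ⟨m + l, ?_, rfl⟩
        have : σ (m : M) + σ (l : M) > 0 :=
          add_pos_of_nonneg_of_pos (hσS _ m.2) hl
        simpa using this
    | zero => simpa using (Submodule.span K s).zero_mem
    | add y z _ _ hy hz =>
      rw [mul_add]; exact (Submodule.span K s).add_mem hy hz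
    | smul c y _ hy =>
      rw [mul_smul_comm]; exact (Submodule.span K s).smul_mem _ hy
  · intro x hx
    induction hx using Submodule.span_induction with
    | mem x hx =>
      obtain ⟨l, hl, rfl⟩ := hx
      rcases lt_or_eq_of_le (h1 l l.2) with h | h
      · rw [(hD l).1 h]
        refine (Submodule.span K s).smul_mem _ (Submodule.subset_span ?_)
        refine ⟨⟨(l : M) + μ, h3 l l.2 h⟩, ?_, rfl⟩
        have : σ (l : M) + σ μ > 0 := add_pos_of_pos_of_nonneg hl hσμ
        simpa using this
      · rw [(hD l).2 h.symm]
        exact (Submodule.span K s).zero_mem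
    | zero => simpa using (Submodule.span K s).zero_mem
    | add y z _ _ hy hz =>
      rw [map_add]; exact (Submodule.span K s).add_mem hy hz
    | smul c y _ hy =>
      rw [Derivation.map_smul]; exact (Submodule.span K s).smul_mem _ hy
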